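/- With R_b, W_b, q_b, a_b the explicit double-cusp functions, the constraint equations hold: a_t (R_t/R) + a_x (R_x/R) + (1/4)(R_x²/R² + R_t²/R²) − R_xx/R − (W_x² + W_t²) − (1/4)e^{−4W}(q_x² + q_t²) = 0, and a_x (R_t/R) + a_t (R_x/R) − R_tx/R + R_x R_t/(2R²) + 2 W_t W_x − (1/2)e^{−4W} q_x q_t = 0. -/

import Mathlib

open Real MeasureTheory Filter

noncomputable def pt (u : ℝ → ℝ → ℝ) : ℝ → ℝ → ℝ := fun t x => deriv (fun s => u s x) t
noncomputable def px (u : ℝ → ℝ → ℝ) : ℝ → ℝ → ℝ := fun t x => deriv (fun y => u t y) x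

private lemma two_mul_hasderiv (t : ℝ) : HasDerivAt (fun s : ℝ => 2 * s) 2 t := by
  simpa using (hasDerivAt_id t).const_mul 2

private lemma hRt (R₀ t x : ℝ) :
    deriv (fun s => R₀ * Real.exp (2 * s) * Real.cosh (2 * x)) t
      = 2 * (R₀ * Real.exp (2 * t) * Real.cosh (2 * x)) := by
  have h : HasDerivAt (fun s : ℝ => R₀ * Real.exp (2 * s) * Real.cosh (2 * x))
      ((R₀ * (Real.exp (2 * t) * 2)) * Real.cosh (2 * x)) t :=
    (((two_mul_hasderiv t).exp.const_mul R₀)).mul_const _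
  rw [h.deriv]; ring

private lemma hRx (R₀ t x : ℝ) :
    deriv (fun y => R₀ * Real.exp (2 * t) * Real.cosh (2 * y)) x
      = 2 * (R₀ * Real.exp (2 * t)) * Real.sinh (2 * x) := by
  have h : HasDerivAt (fun y : ℝ => R₀ * Real.exp (2 * t) * Real.cosh (2 * y))
      ((R₀ * Real.exp (2 * t)) * (Real.sinh (2 * x) * 2)) x :=
    ((two_mul_hasderiv x).cosh).const_mul _
  rw [h.deriv]; ring

private lemma hSx (c t x : ℝ) :
    deriv (fun y => 2 * (c * Real.exp (2 * t)) * Real.sinh (2 * y)) x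
      = 4 * (c * Real.exp (2 * t)) * Real.cosh (2 * x) := by
  have h : HasDerivAt (fun y : ℝ => 2 * (c * Real.exp (2 * t)) * Real.sinh (2 * y))
      ((2 * (c * Real.exp (2 * t))) * (Real.cosh (2 * x) * 2)) x :=
    ((two_mul_hasderiv x).sinh).const_mul _
  rw [h.deriv]; ring

private lemma hSt (c s x : ℝ) :
    deriv (fun t => 2 * (c * Real.exp (2 * t)) * Real.sinh (2 * x)) s
      = 4 * (c * Real.exp (2 * s)) * Real.sinh (2 * x) := by
  have h : HasDerivAt (fun t : ℝ => 2 * (c * Real.exp (2 * t)) * Real.sinh (2 * x))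
      ((2 * (c * (Real.exp (2 * s) * 2))) * Real.sinh (2 * x)) s :=
    ((((two_mul_hasderiv s).exp.const_mul c).const_mul 2)).mul_const _
  rw [h.deriv]; ring

private lemma hWx (W₀ W₁ x : ℝ) :
    deriv (fun y => W₁ + W₀ * Real.arctan (Real.exp (2 * y))) x
      = W₀ / Real.cosh (2 * x) := by
  have harc : HasDerivAt (fun y : ℝ => Real.arctan (Real.exp (2 * y)))
      ((1 / (1 + Real.exp (2 * x) ^ 2)) * (Real.exp (2 * x) * 2)) x :=
    ((two_mul_hasderiv x).exp).arctan
  have h : HasDerivAt (fun y : ℝ => W₁ + W₀ * Real.arctan (Real.exp (2 * y)))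
      (W₀ * ((1 / (1 + Real.exp (2 * x) ^ 2)) * (Real.exp (2 * x) * 2))) x :=
    (harc.const_mul W₀).const_add W₁
  rw [h.deriv]
  have hc : Real.cosh (2 * x) = (Real.exp (2 * x) + Real.exp (-(2 * x))) / 2 := by
    rw [Real.cosh_eq]
  rw [hc, Real.exp_neg]
  have hpos : (0:ℝ) < Real.exp (2 * x) := Real.exp_pos _
  rw [div_div_eq_mul_div, eq_div_iff (by positivity)]
  field_simp
  ring

private lemma hax (W₀ a₀ c t x : ℝ) :
    deriv (fun y => a₀ - c * (1 / 2) * Real.log (Real.cosh (2 * y)) + (3 / 2 + W₀ ^ 2 / 2) * t) x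
      = -c * Real.sinh (2 * x) / Real.cosh (2 * x) := by
  have hne : Real.cosh (2 * x) ≠ 0 := (Real.cosh_pos _).ne'
  have hlog : HasDerivAt (fun y : ℝ => Real.log (Real.cosh (2 * y)))
      ((Real.sinh (2 * x) * 2) / Real.cosh (2 * x)) x :=
    ((two_mul_hasderiv x).cosh).log hne
  have h : HasDerivAt
      (fun y : ℝ => a₀ - c * (1 / 2) * Real.log (Real.cosh (2 * y)) + (3 / 2 + W₀ ^ 2 / 2) * t)
      (-(c * (1 / 2) * ((Real.sinh (2 * x) * 2) / Real.cosh (2 * x)))) x := by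
    exact (((hlog.const_mul (c * (1 / 2))).const_sub a₀).add_const _)
  rw [h.deriv]
  field_simp

private lemma hat (W₀ a₀ c t x : ℝ) :
    deriv (fun s => a₀ - c * (1 / 2) * Real.log (Real.cosh (2 * x)) + (3 / 2 + W₀ ^ 2 / 2) * s) t
      = 3 / 2 + W₀ ^ 2 / 2 := by
  have h : HasDerivAt
      (fun s : ℝ => a₀ - c * (1 / 2) * Real.log (Real.cosh (2 * x)) + (3 / 2 + W₀ ^ 2 / 2) * s)
      ((3 / 2 + W₀ ^ 2 / 2) * 1) t :=
    (((hasDerivAt_id t).const_mul _)).const_add _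
  rw [h.deriv]; ring

/-- the explicit double-cusp functions satisfy the two constraint
equations. -/
theorem statement5 (R₀ W₀ W₁ q₀ a₀ : ℝ) (hR₀ : 0 < R₀)
    (Rb Wb qb ab : ℝ → ℝ → ℝ)
    (hRb : Rb = fun t x => R₀ * Real.exp (2 * t) * Real.cosh (2 * x))
    (hWb : Wb = fun _ x => W₁ + W₀ * Real.arctan (Real.exp (2 * x)))
    (hqb : qb = fun _ _ => q₀)
    (hab : ab = fun t x => a₀ - (1 / 2 + W₀ ^ 2 / 2) * (1 / 2) * Real.log (Real.cosh (2 * x))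
        + (3 / 2 + W₀ ^ 2 / 2) * t) :
    (∀ t x, pt ab t x * (pt Rb t x / Rb t x) + px ab t x * (px Rb t x / Rb t x)
        + (1 / 4) * ((px Rb t x) ^ 2 / (Rb t x) ^ 2 + (pt Rb t x) ^ 2 / (Rb t x) ^ 2)
        - px (px Rb) t x / Rb t x
        - ((px Wb t x) ^ 2 + (pt Wb t x) ^ 2)
        - (1 / 4) * Real.exp (-(4 * Wb t x)) * ((px qb t x) ^ 2 + (pt qb t x) ^ 2) = 0) ∧
    (∀ t x, px ab t x * (pt Rb t x / Rb t x) + pt ab t x * (px Rb t x / Rb t x)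
        - pt (px Rb) t x / Rb t x
        + px Rb t x * pt Rb t x / (2 * (Rb t x) ^ 2)
        + 2 * pt Wb t x * px Wb t x
        - (1 / 2) * Real.exp (-(4 * Wb t x)) * px qb t x * pt qb t x = 0) := by
  subst hRb hWb hqb hab
  have hpxRb : px (fun t x => R₀ * Real.exp (2 * t) * Real.cosh (2 * x))
      = fun t x => 2 * (R₀ * Real.exp (2 * t)) * Real.sinh (2 * x) := by
    funext t x
    exact hRx R₀ t x
  have hq0 : ∀ t x, pt (fun _ _ : ℝ => q₀) t x = 0 ∧ px (fun _ _ : ℝ => q₀) t x = 0 := by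
    intro t x
    constructor <;> simp [pt, px]
  have hWt : ∀ t x, pt (fun _ x : ℝ => W₁ + W₀ * Real.arctan (Real.exp (2 * x))) t x = 0 := by
    intro t x; simp [pt]
  constructor <;> intro t x
  · have h1 := hRt R₀ t x
    have h2 := hRx R₀ t x
    have h3 := hWx W₀ W₁ x
    have h4 := hax W₀ a₀ (1 / 2 + W₀ ^ 2 / 2) t x
    have h5 := hat W₀ a₀ (1 / 2 + W₀ ^ 2 / 2) t x
    have h6 : px (px (fun t x => R₀ * Real.exp (2 * t) * Real.cosh (2 * x))) t x
        = 4 * (R₀ * Real.exp (2 * t)) * Real.cosh (2 * x) := by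
      rw [hpxRb]
      exact hSx R₀ t x
    simp only [pt, px] at *
    rw [h1, h2, h3, h4, h5, h6, (hq0 t x).1, (hq0 t x).2, hWt t x]
    have hcpos : (0:ℝ) < Real.cosh (2 * x) := Real.cosh_pos _
    have hid : Real.cosh (2 * x) ^ 2 - Real.sinh (2 * x) ^ 2 = 1 := Real.cosh_sq_sub_sinh_sq _
    have hepos : (0:ℝ) < Real.exp (2 * t) := Real.exp_pos _
    field_simp
    linear_combination (4 * W₀ ^ 2) * hid
  · have h1 := hRt R₀ t x
    have h2 := hRx R₀ t x
    have h3 := hWx W₀ W₁ x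
    have h4 := hax W₀ a₀ (1 / 2 + W₀ ^ 2 / 2) t x
    have h5 := hat W₀ a₀ (1 / 2 + W₀ ^ 2 / 2) t x
    have h6 : pt (px (fun t x => R₀ * Real.exp (2 * t) * Real.cosh (2 * x))) t x
        = 4 * (R₀ * Real.exp (2 * t)) * Real.sinh (2 * x) := by
      rw [hpxRb]
      exact hSt R₀ t x
    simp only [pt, px] at *
    rw [h1, h2, h3, h4, h5, h6, (hq0 t x).1, (hq0 t x).2, hWt t x]
    have hcpos : (0:ℝ) < Real.cosh (2 * x) := Real.cosh_pos _
    have hepos : (0:ℝ) < Real.exp (2 * t) := Real.exp_pos _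
    field_simp
    ring
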